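/- arXiv:0704.0298 — 4 statements merged into one kernel-verified Lean document; each statement's English description precedes it below -/
import Mathlib

section
/- If β: [0,∞) → [0,∞) is subadditive (β(t₁+t₂) ≤ β(t₁)+β(t₂)) and ∫₁^∞ β(t)/t² dt < ∞, then lim_{t→∞} β(t)/t = 0. -/
open MeasureTheory

/-- If β : [0,∞) → [0,∞) is subadditive and ∫₁^∞ β(t)/t² dt < ∞,
then β(t)/t → 0 as t → ∞. -/
theorem stmt_1 (β : ℝ → ℝ)
    (hmeas : Measurable β)
    (hnonneg : ∀ t, 0 ≤ t → 0 ≤ β t)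
    (hsubadd : ∀ t₁ t₂, 0 ≤ t₁ → 0 ≤ t₂ → β (t₁ + t₂) ≤ β t₁ + β t₂)
    (hint : IntegrableOn (fun t => β t / t ^ 2) (Set.Ici (1 : ℝ))) :
    Filter.Tendsto (fun t => β t / t) Filter.atTop (nhds 0) := by
  set f : ℝ → ℝ := fun s => β s / s ^ 2 with hfdef
  have hfint : IntegrableOn f (Set.Ioi 1) := hint.mono Set.Ioi_subset_Ici_self le_rfl
  have hfnn : ∀ s : ℝ, 1 ≤ s → 0 ≤ f s := fun s hs =>
    div_nonneg (hnonneg s (by linarith)) (by positivity)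
  set F : ℝ → ℝ := fun a => ∫ s in Set.Ioi a, f s with hFdef
  have key : ∀ a : ℝ, 1 ≤ a → F a = (∫ s in Set.Ioi 1, f s) - ∫ x in (1:ℝ)..a, f x := by
    intro a ha
    have h1 : IntegrableOn f (Set.Ioc 1 a) := hfint.mono Set.Ioc_subset_Ioi_self le_rfl
    have h2 : IntegrableOn f (Set.Ioi a) := hfint.mono (Set.Ioi_subset_Ioi ha) le_rfl
    have hu := setIntegral_union (Set.Ioc_disjoint_Ioi le_rfl) measurableSet_Ioi h1 h2
    rw [Set.Ioc_union_Ioi_eq_Ioi ha] at hu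
    rw [intervalIntegral.integral_of_le ha]
    simp only [hFdef]
    linarith [hu]
  have hFtend : Filter.Tendsto F Filter.atTop (nhds 0) := by
    have h1 : Filter.Tendsto (fun a : ℝ => (∫ s in Set.Ioi 1, f s) - ∫ x in (1:ℝ)..a, f x)
        Filter.atTop (nhds 0) := by
      have h := intervalIntegral_tendsto_integral_Ioi (1:ℝ) hfint Filter.tendsto_id
      have h2 := (tendsto_const_nhds
        (x := (∫ s in Set.Ioi 1, f s)) (f := Filter.atTop (α := ℝ))).sub h
      simpa using h2
    refine Filter.Tendsto.congr' ?_ h1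
    filter_upwards [Filter.eventually_ge_atTop (1:ℝ)] with a ha
    exact (key a ha).symm
  -- main pointwise bound for t ≥ 6
  have main : ∀ t : ℝ, 6 ≤ t → β t / t ≤ 6 * F (t / 3) := by
    intro t ht
    have ht0 : (0:ℝ) < t := by linarith
    have ht3 : (1:ℝ) ≤ t / 3 := by linarith
    -- interval integrability of β on subintervals of [t/3, t]
    have hβI : ∀ a b : ℝ, t / 3 ≤ a → a ≤ b → b ≤ t → IntervalIntegrable β volume a b := by
      intro a b ha hab hb
      rw [intervalIntegrable_iff_integrableOn_Ioc_of_le hab]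
      have hsub : Set.Ioc a b ⊆ Set.Ioi 1 := fun s hs => by
        simp only [Set.mem_Ioc, Set.mem_Ioi] at *
        linarith [hs.1]
      have hg : IntegrableOn (fun s => t ^ 2 * f s) (Set.Ioc a b) :=
        (hfint.mono hsub le_rfl).const_mul _
      refine hg.mono' (hmeas.aestronglyMeasurable.restrict) ?_
      filter_upwards [ae_restrict_mem measurableSet_Ioc] with s hs
      have hs1 : 1 ≤ s := by
        have := hs.1
        linarith
      have hspos : (0:ℝ) < s := by linarith
      rw [Real.norm_eq_abs, abs_of_nonneg (hnonneg s hspos.le)]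
      have hst : s ≤ t := le_trans hs.2 hb
      have hβnn : 0 ≤ β s := hnonneg s hspos.le
      calc β s = β s / s ^ 2 * s ^ 2 := by field_simp
        _ ≤ β s / s ^ 2 * t ^ 2 := by
            have h1 : 0 ≤ β s / s ^ 2 := div_nonneg hβnn (by positivity)
            have h2 : s ^ 2 ≤ t ^ 2 := by nlinarith
            exact mul_le_mul_of_nonneg_left h2 h1
        _ = t ^ 2 * f s := by rw [hfdef]; ring
    have hII1 : IntervalIntegrable β volume (t/3) (t/2) := hβI _ _ le_rfl (by linarith) (by linarith)
    have hII2 : IntervalIntegrable β volume (t/2) (2*t/3) := hβI _ _ (by linarith) (by linarith) (by linarith)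
    have hII3 : IntervalIntegrable β volume (2*t/3) t := hβI _ _ (by linarith) (by linarith) le_rfl
    have hIIc : IntervalIntegrable (fun s => β (t - s)) volume (t/2) (2*t/3) := by
      have h := hII1.comp_sub_left t
      have e1 : t - t/3 = 2*t/3 := by ring
      have e2 : t - t/2 = t/2 := by ring
      rw [e1, e2] at h
      exact h.symm
    -- averaging the subadditivity inequality
    have step1 : (2*t/3 - t/2) * β t ≤ ∫ s in (t/2)..(2*t/3), (β s + β (t - s)) := by
      have hmono := intervalIntegral.integral_mono_on (by linarith : t/2 ≤ 2*t/3)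
        (intervalIntegrable_const (c := β t)) (hII2.add hIIc) ?_
      · simpa [smul_eq_mul, mul_comm] using hmono
      · intro s hs
        have hs0 : 0 ≤ s := by linarith [hs.1]
        have hts : 0 ≤ t - s := by linarith [hs.2]
        have h := hsubadd s (t - s) hs0 hts
        rwa [show s + (t - s) = t by ring] at h
    have step2 : (∫ s in (t/2)..(2*t/3), (β s + β (t - s)))
        = (∫ s in (t/2)..(2*t/3), β s) + ∫ s in (t/3)..(t/2), β s := by
      rw [intervalIntegral.integral_add hII2 hIIc, intervalIntegral.integral_comp_sub_left β t]
      norm_num [show t - 2*t/3 = t/3 by ring, show t - t/2 = t/2 by ring]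
    have step3 : (∫ s in (t/2)..(2*t/3), β s) + (∫ s in (t/3)..(t/2), β s)
        = ∫ s in (t/3)..(2*t/3), β s := by
      rw [add_comm]
      exact intervalIntegral.integral_add_adjacent_intervals hII1 hII2
    have step4 : (∫ s in (t/3)..(2*t/3), β s) ≤ ∫ s in (t/3)..t, β s := by
      have hpos : 0 ≤ ∫ s in (2*t/3)..t, β s := by
        apply intervalIntegral.integral_nonneg (by linarith)
        intro x hx
        exact hnonneg x (by linarith [hx.1])
      have := intervalIntegral.integral_add_adjacent_intervals (hII1.trans hII2) hII3
      linarith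
    have step5 : (∫ s in (t/3)..t, β s) ≤ ∫ s in (t/3)..t, t ^ 2 * f s := by
      apply intervalIntegral.integral_mono_on (by linarith) (hII1.trans (hII2.trans hII3))
      · have hsub : Set.Ioc (t/3) t ⊆ Set.Ioi 1 := fun s hs => by
          simp only [Set.mem_Ioc, Set.mem_Ioi] at *
          linarith [hs.1]
        rw [intervalIntegrable_iff_integrableOn_Ioc_of_le (by linarith)]
        exact (hfint.mono hsub le_rfl).const_mul _
      · intro s hs
        have hs1 : 1 ≤ s := by linarith [hs.1]
        have hspos : (0:ℝ) < s := by linarith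
        have hβnn : 0 ≤ β s := hnonneg s hspos.le
        calc β s = β s / s ^ 2 * s ^ 2 := by field_simp
          _ ≤ β s / s ^ 2 * t ^ 2 := by
              have h1 : 0 ≤ β s / s ^ 2 := div_nonneg hβnn (by positivity)
              have h2 : s ^ 2 ≤ t ^ 2 := by nlinarith [hs.2]
              exact mul_le_mul_of_nonneg_left h2 h1
          _ = t ^ 2 * f s := by rw [hfdef]; ring
    have step6 : (∫ s in (t/3)..t, t ^ 2 * f s) ≤ t ^ 2 * F (t/3) := by
      rw [intervalIntegral.integral_const_mul]
      have hIoi : IntegrableOn f (Set.Ioi (t/3)) :=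
        hfint.mono (Set.Ioi_subset_Ioi ht3) le_rfl
      have hmono : (∫ s in (t/3)..t, f s) ≤ F (t/3) := by
        rw [intervalIntegral.integral_of_le (by linarith : t/3 ≤ t)]
        refine setIntegral_mono_set hIoi ?_ (Set.Ioc_subset_Ioi_self.eventuallyLE)
        filter_upwards [ae_restrict_mem measurableSet_Ioi] with s hs
        exact hfnn s (by linarith [Set.mem_Ioi.mp hs])
      exact mul_le_mul_of_nonneg_left hmono (by positivity)
    have hchain : t / 6 * β t ≤ t ^ 2 * F (t/3) := by
      have e : 2*t/3 - t/2 = t/6 := by ring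
      rw [e] at step1
      linarith [step1, step2 ▸ step1]
    rw [div_le_iff₀ ht0]
    nlinarith [hchain, ht0]
  -- squeeze
  have hup : Filter.Tendsto (fun t : ℝ => 6 * F (t / 3)) Filter.atTop (nhds 0) := by
    have hdiv : Filter.Tendsto (fun t : ℝ => t / 3) Filter.atTop Filter.atTop :=
      Filter.tendsto_id.atTop_div_const (by norm_num)
    have := (hFtend.comp hdiv).const_mul (6:ℝ)
    simpa using this
  refine tendsto_of_tendsto_of_tendsto_of_le_of_le' tendsto_const_nhds hup ?_ ?_
  · filter_upwards [Filter.eventually_ge_atTop (1:ℝ)] with t ht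
    exact div_nonneg (hnonneg t (by linarith)) (by linarith)
  · filter_upwards [Filter.eventually_ge_atTop (6:ℝ)] with t ht
    exact main t ht
end

section
/- Let (a_k) be a sequence of positive reals with ∑ a_k = 1. Then the infinite product f(z) = ∏_{k=1}^∞ (sin(a_k z/2)/(a_k z/2))² converges locally uniformly on ℂ and defines an entire function, and for all z ∈ ℂ and r > 0, |f(rz)| ≤ e^{r|Im z|}. -/
open Complex
open scoped Nat

/-- sinc-type factor: sin(w)/w extended by 1 at w = 0. -/
noncomputable def sincFactor (w : ℂ) : ℂ := if w = 0 then 1 else Complex.sin w / w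

lemma my_sinh_abs_le (y : ℝ) : |Real.sinh y| ≤ |y| * Real.exp |y| := by
  rw [Real.abs_sinh]
  set t := |y| with ht
  have ht0 : 0 ≤ t := abs_nonneg y
  rw [Real.sinh_eq]
  have h1 := Real.add_one_le_exp (-2 * t)
  have h2 := Real.exp_pos t
  have h3 : Real.exp (-t) = Real.exp t * Real.exp (-2 * t) := by
    rw [← Real.exp_add]; ring_nf
  nlinarith [Real.exp_pos (-2 * t)]

lemma my_abs_sin_le (w : ℂ) :
    ‖Complex.sin w‖ ≤ ‖w‖ * Real.exp |w.im| := by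
  have hsq : ‖Complex.sin w‖ ^ 2
      = Real.sin w.re ^ 2 + Real.sinh w.im ^ 2 := by
    rw [Complex.sq_norm, Complex.sin_eq]
    simp only [← Complex.ofReal_sin, ← Complex.ofReal_cos, ← Complex.ofReal_cosh,
      ← Complex.ofReal_sinh]
    simp only [Complex.normSq_apply, Complex.add_re, Complex.add_im, Complex.mul_re,
      Complex.mul_im, Complex.I_re, Complex.I_im, Complex.ofReal_re, Complex.ofReal_im]
    nlinarith [Real.sin_sq_add_cos_sq w.re, Real.cosh_sq w.im]
  have h2 : ‖Complex.sin w‖ ^ 2 ≤ (‖w‖ * Real.exp |w.im|) ^ 2 := by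
    rw [hsq]
    have hs := my_sinh_abs_le w.im
    have hsin : |Real.sin w.re| ≤ |w.re| := Real.abs_sin_le_abs
    have habs : ‖w‖ ^ 2 = w.re ^ 2 + w.im ^ 2 := by
      rw [Complex.sq_norm, Complex.normSq_apply]; ring
    have h4 := pow_le_pow_left₀ (abs_nonneg _) hs 2
    have h5 := pow_le_pow_left₀ (abs_nonneg _) hsin 2
    rw [mul_pow, _root_.sq_abs, _root_.sq_abs] at h4
    rw [_root_.sq_abs, _root_.sq_abs] at h5
    have h6 : (1 : ℝ) ≤ Real.exp |w.im| := Real.one_le_exp (abs_nonneg _)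
    have h7 : (0 : ℝ) < Real.exp |w.im| := Real.exp_pos _
    rw [mul_pow, habs]
    nlinarith [h4, h5, sq_nonneg w.re, sq_nonneg w.im,
      mul_self_nonneg (Real.exp |w.im| - 1), sq_nonneg (Real.sin w.re)]
  have hb : (0 : ℝ) ≤ ‖w‖ * Real.exp |w.im| :=
    mul_nonneg (norm_nonneg w) (Real.exp_pos _).le
  exact (abs_le_of_sq_le_sq' h2 hb).2

lemma my_abs_sincFactor_le (w : ℂ) : ‖sincFactor w‖ ≤ Real.exp |w.im| := by
  rcases eq_or_ne w 0 with rfl | h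
  · simp [sincFactor]
  · rw [sincFactor, if_neg h, norm_div]
    rw [div_le_iff₀ (norm_pos_iff.mpr h)]
    exact (my_abs_sin_le w).trans_eq (mul_comm _ _)

lemma my_abs_sin_sub_le (w : ℂ) :
    ‖Complex.sin w - w‖ ≤ ‖w‖ ^ 2 * Real.exp (‖w‖) := by
  set x := ‖w‖ with hx
  have hx0 : 0 ≤ x := norm_nonneg w
  have h := Complex.hasSum_sin w
  have h1 : HasSum (fun n : ℕ => (-1 : ℂ) ^ (n + 1) * w ^ (2 * (n + 1) + 1)
      / ((2 * (n + 1) + 1)! : ℂ)) (Complex.sin w - w) := by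
    refine (hasSum_nat_add_iff (f := fun n : ℕ =>
      (-1 : ℂ) ^ n * w ^ (2 * n + 1) / ((2 * n + 1)! : ℂ)) 1).2 ?_
    simpa using h
  have hg : HasSum (fun n : ℕ => x ^ 2 * (x ^ (2 * n + 1) / ((2 * n + 1)! : ℝ)))
      (x ^ 2 * Real.sinh x) := (Real.hasSum_sinh x).mul_left _
  have hle : ∀ n : ℕ, ‖(-1 : ℂ) ^ (n + 1) * w ^ (2 * (n + 1) + 1)
      / ((2 * (n + 1) + 1)! : ℂ)‖ ≤ x ^ 2 * (x ^ (2 * n + 1) / ((2 * n + 1)! : ℝ)) := by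
    intro n
    rw [norm_div, norm_mul, norm_pow, norm_pow, norm_neg, norm_one, one_pow, one_mul]
    rw [← hx]
    have hnc : ‖((2 * (n + 1) + 1)! : ℂ)‖ = ((2 * (n + 1) + 1)! : ℝ) := by
      simp
    rw [hnc]
    have hxp : x ^ (2 * (n + 1) + 1) = x ^ 2 * x ^ (2 * n + 1) := by
      rw [show 2 * (n + 1) + 1 = 2 + (2 * n + 1) from by ring, pow_add]
    rw [hxp, mul_div_assoc]
    apply mul_le_mul_of_nonneg_left ?_ (by positivity)
    apply div_le_div_of_nonneg_left (by positivity)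
      (by exact_mod_cast Nat.factorial_pos _)
    exact_mod_cast Nat.factorial_le (by omega)
  have hmain := tsum_of_norm_bounded hg hle
  rw [h1.tsum_eq] at hmain
  refine hmain.trans ?_
  have hsh : Real.sinh x ≤ Real.exp x := by
    rw [Real.sinh_eq]
    nlinarith [Real.exp_pos (-x), Real.exp_pos x]
  exact mul_le_mul_of_nonneg_left hsh (by positivity)

lemma my_abs_sincFactor_sub_one_le (w : ℂ) :
    ‖sincFactor w - 1‖ ≤ ‖w‖ * Real.exp (‖w‖) := by
  rcases eq_or_ne w 0 with rfl | h
  · simp [sincFactor]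
  · have hw : 0 < ‖w‖ := norm_pos_iff.mpr h
    have heq : sincFactor w - 1 = (Complex.sin w - w) / w := by
      rw [sincFactor, if_neg h]
      field_simp
    rw [heq, norm_div, div_le_iff₀ hw]
    calc ‖Complex.sin w - w‖
        ≤ ‖w‖ ^ 2 * Real.exp (‖w‖) := my_abs_sin_sub_le w
      _ = ‖w‖ * Real.exp (‖w‖) * ‖w‖ := by ring

lemma my_differentiable_sincFactor : Differentiable ℂ sincFactor := by
  have hne : ∀ w : ℂ, w ≠ 0 → DifferentiableAt ℂ sincFactor w := by
    intro w hw
    have he : (fun v : ℂ => Complex.sin v / v) =ᶠ[nhds w] sincFactor := by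
      filter_upwards [isOpen_compl_singleton.mem_nhds (by simpa using hw)] with v hv
      have hv' : v ≠ 0 := hv
      simp [sincFactor, hv']
    exact ((Complex.differentiable_sin.differentiableAt.div differentiableAt_id hw)).congr_of_eventuallyEq
      he.symm
  intro w
  rcases eq_or_ne w 0 with rfl | hw
  · have hd : ∀ᶠ v in nhdsWithin (0 : ℂ) {(0 : ℂ)}ᶜ, DifferentiableAt ℂ sincFactor v := by
      filter_upwards [self_mem_nhdsWithin] with v hv
      exact hne v hv
    have hc : ContinuousAt sincFactor 0 := by
      have hds : HasDerivAt Complex.sin 1 0 := by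
        simpa using Complex.hasDerivAt_sin 0
      have ht := hasDerivAt_iff_tendsto_slope.mp hds
      have ht2 : Filter.Tendsto sincFactor (nhdsWithin (0 : ℂ) {(0 : ℂ)}ᶜ) (nhds 1) := by
        refine ht.congr' ?_
        filter_upwards [self_mem_nhdsWithin] with v hv
        have hv' : v ≠ 0 := hv
        rw [slope_def_field, sincFactor, if_neg hv']
        simp
      have hT : Filter.Tendsto sincFactor (nhds (0 : ℂ)) (nhds 1) := by
        rw [← nhdsNE_sup_pure (0 : ℂ), Filter.tendsto_sup]
        refine ⟨ht2, ?_⟩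
        have : sincFactor 0 = 1 := by simp [sincFactor]
        simpa [this] using tendsto_pure_nhds sincFactor 0
      have h0 : sincFactor 0 = 1 := by simp [sincFactor]
      rw [ContinuousAt, h0]
      exact hT
    exact (Complex.analyticAt_of_differentiable_on_punctured_nhds_of_continuousAt hd
      hc).differentiableAt
  · exact hne w hw

lemma my_prod_telescope (u : ℕ → ℂ) (n : ℕ) :
    ∏ k ∈ Finset.range n, u k
      = 1 + ∑ k ∈ Finset.range n, (∏ j ∈ Finset.range k, u j) * (u k - 1) := by
  induction n with
  | zero => simp
  | succ n ih =>
    rw [Finset.prod_range_succ, Finset.sum_range_succ, ih]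
    ring

/-- For positive (a_k) with ∑ a_k = 1, the product
f(z) = ∏_{k=1}^∞ (sin(a_k z/2)/(a_k z/2))² converges locally uniformly to an
entire function f, and |f(rz)| ≤ e^{r|Im z|} for all z ∈ ℂ, r > 0. -/
theorem stmt_7 (a : ℕ → ℝ) (hpos : ∀ k, 0 < a k)
    (hsum : HasSum a 1) :
    ∃ f : ℂ → ℂ,
      TendstoLocallyUniformly
        (fun n (z : ℂ) => ∏ k ∈ Finset.range n, (sincFactor ((a k : ℂ) * z / 2)) ^ 2)
        f Filter.atTop ∧
      Differentiable ℂ f ∧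
      ∀ (z : ℂ) (r : ℝ), 0 < r →
        ‖f (r * z)‖ ≤ Real.exp (r * |z.im|) := by
  classical
  have ha0 : ∀ k, (0 : ℝ) ≤ a k := fun k => (hpos k).le
  have ha1 : ∀ k, a k ≤ 1 := fun k => le_hasSum hsum k fun i _ => ha0 i
  have hw : ∀ (k : ℕ) (z : ℂ), (a k : ℂ) * z / 2 = ((a k / 2 : ℝ) : ℂ) * z := by
    intro k z; push_cast; ring
  have him : ∀ (k : ℕ) (z : ℂ), ((a k : ℂ) * z / 2).im = a k / 2 * z.im := by
    intro k z; rw [hw]; simp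
  have habsw : ∀ (k : ℕ) (z : ℂ), ‖(a k : ℂ) * z / 2‖
      = a k / 2 * ‖z‖ := by
    intro k z
    rw [hw, norm_mul, Complex.norm_real, Real.norm_eq_abs, _root_.abs_of_nonneg (by linarith [ha0 k] : (0:ℝ) ≤ a k / 2)]
  -- bound for individual factor
  have hfac : ∀ (k : ℕ) (z : ℂ),
      ‖(sincFactor ((a k : ℂ) * z / 2)) ^ 2‖ ≤ Real.exp (a k * |z.im|) := by
    intro k z
    rw [norm_pow]
    have h1 := my_abs_sincFactor_le ((a k : ℂ) * z / 2)
    have h2 : (‖sincFactor ((a k : ℂ) * z / 2)‖) ^ 2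
        ≤ (Real.exp |((a k : ℂ) * z / 2).im|) ^ 2 :=
      pow_le_pow_left₀ (norm_nonneg _) h1 2
    refine h2.trans ?_
    rw [sq, ← Real.exp_add, him]
    apply Real.exp_le_exp.2
    rw [abs_mul, _root_.abs_of_nonneg (by linarith [ha0 k] : (0:ℝ) ≤ a k / 2)]
    nlinarith [abs_nonneg z.im]
  -- partial products are bounded by exp |Im z|
  have hProd : ∀ (n : ℕ) (z : ℂ),
      ‖∏ k ∈ Finset.range n, (sincFactor ((a k : ℂ) * z / 2)) ^ 2‖
        ≤ Real.exp |z.im| := by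
    intro n z
    rw [norm_prod]
    calc ∏ k ∈ Finset.range n, ‖(sincFactor ((a k : ℂ) * z / 2)) ^ 2‖
        ≤ ∏ k ∈ Finset.range n, Real.exp (a k * |z.im|) :=
          Finset.prod_le_prod (fun k _ => norm_nonneg _) (fun k _ => hfac k z)
      _ = Real.exp (∑ k ∈ Finset.range n, a k * |z.im|) := (Real.exp_sum _ _).symm
      _ ≤ Real.exp |z.im| := by
          apply Real.exp_le_exp.2
          rw [← Finset.sum_mul]
          have hs : ∑ k ∈ Finset.range n, a k ≤ 1 :=
            sum_le_hasSum _ (fun i _ => ha0 i) hsum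
          nlinarith [abs_nonneg z.im,
            Finset.sum_nonneg (fun i (_ : i ∈ Finset.range n) => ha0 i)]
  -- the limit function
  set F : ℕ → ℂ → ℂ := fun k z =>
    (∏ j ∈ Finset.range k, (sincFactor ((a j : ℂ) * z / 2)) ^ 2) *
      ((sincFactor ((a k : ℂ) * z / 2)) ^ 2 - 1) with hF
  set f : ℂ → ℂ := fun z => 1 + ∑' k, F k z with hfdef
  -- uniform convergence on closed balls
  have key : ∀ R : ℝ, 0 ≤ R →
      TendstoUniformlyOn
        (fun n (z : ℂ) => ∏ k ∈ Finset.range n, (sincFactor ((a k : ℂ) * z / 2)) ^ 2)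
        f Filter.atTop (Metric.closedBall 0 R) := by
    intro R hR
    set C : ℝ := Real.exp R * ((Real.exp (R / 2) + 1) * (Real.exp (R / 2) * (R / 2))) with hC
    have hsum' : Summable fun k => C * a k := hsum.summable.mul_left C
    have hbound : ∀ (k : ℕ) (z : ℂ), z ∈ Metric.closedBall 0 R → ‖F k z‖ ≤ C * a k := by
      intro k z hz
      have hzR : ‖z‖ ≤ R := by
        simpa [Complex.dist_eq] using Metric.mem_closedBall.1 hz
      have himz : |z.im| ≤ R := (Complex.abs_im_le_norm z).trans hzR
      have h1 : ‖∏ j ∈ Finset.range k, (sincFactor ((a j : ℂ) * z / 2)) ^ 2‖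
          ≤ Real.exp R := (hProd k z).trans (Real.exp_le_exp.2 himz)
      have hwabs : ‖(a k : ℂ) * z / 2‖ ≤ a k * (R / 2) := by
        rw [habsw]
        have := mul_le_mul_of_nonneg_left hzR (by linarith [ha0 k] : (0:ℝ) ≤ a k / 2)
        linarith
      have hwR : ‖(a k : ℂ) * z / 2‖ ≤ R / 2 := by
        refine hwabs.trans ?_
        nlinarith [ha1 k, ha0 k]
      -- |s^2 - 1| ≤ (|s|+1) * |s - 1|
      set s : ℂ := sincFactor ((a k : ℂ) * z / 2) with hs
      have h2 : ‖s ^ 2 - 1‖ = ‖s + 1‖ * ‖s - 1‖ := by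
        rw [← norm_mul]
        congr 1
        ring
      have h3 : ‖s + 1‖ ≤ Real.exp (R / 2) + 1 := by
        refine (norm_add_le _ _).trans ?_
        simp only [norm_one]
        have := my_abs_sincFactor_le ((a k : ℂ) * z / 2)
        have h4 : |((a k : ℂ) * z / 2).im| ≤ R / 2 :=
          (Complex.abs_im_le_norm _).trans hwR
        have := this.trans (Real.exp_le_exp.2 h4)
        linarith
      have h5 : ‖s - 1‖ ≤ Real.exp (R / 2) * (a k * (R / 2)) := by
        refine (my_abs_sincFactor_sub_one_le _).trans ?_
        have hexp : Real.exp (‖(a k : ℂ) * z / 2‖) ≤ Real.exp (R / 2) :=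
          Real.exp_le_exp.2 hwR
        have habs0 : (0:ℝ) ≤ ‖(a k : ℂ) * z / 2‖ := norm_nonneg _
        nlinarith [Real.exp_pos (‖(a k : ℂ) * z / 2‖),
          Real.exp_pos (R / 2), ha0 k]
      have hnorm : ‖F k z‖
          = ‖∏ j ∈ Finset.range k, (sincFactor ((a j : ℂ) * z / 2)) ^ 2‖
            * ‖s ^ 2 - 1‖ := by
        rw [hF, hs]
        simp [norm_mul]
      rw [hnorm, h2, hC]
      have hP0 : (0:ℝ) ≤ ‖∏ j ∈ Finset.range k, (sincFactor ((a j : ℂ) * z / 2)) ^ 2‖ :=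
        norm_nonneg _
      have hsp0 : (0:ℝ) ≤ ‖s + 1‖ := norm_nonneg _
      have hsm0 : (0:ℝ) ≤ ‖s - 1‖ := norm_nonneg _
      have hexpR : (0:ℝ) < Real.exp R := Real.exp_pos _
      have hexpR2 : (0:ℝ) < Real.exp (R / 2) := Real.exp_pos _
      calc ‖∏ j ∈ Finset.range k, (sincFactor ((a j : ℂ) * z / 2)) ^ 2‖
            * (‖s + 1‖ * ‖s - 1‖)
          ≤ Real.exp R * ((Real.exp (R / 2) + 1) * (Real.exp (R / 2) * (a k * (R / 2)))) := by
            apply mul_le_mul h1 ?_ (mul_nonneg hsp0 hsm0) hexpR.le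
            apply mul_le_mul h3 h5 hsm0 (by positivity)
        _ = Real.exp R * ((Real.exp (R / 2) + 1) * (Real.exp (R / 2) * (R / 2))) * a k := by
            ring
    have hts := tendstoUniformlyOn_tsum_nat hsum' hbound
    have hts1 : TendstoUniformlyOn (fun n z => 1 + ∑ k ∈ Finset.range n, F k z) f
        Filter.atTop (Metric.closedBall 0 R) := by
      rw [Metric.tendstoUniformlyOn_iff] at hts ⊢
      intro ε hε
      filter_upwards [hts ε hε] with n hn x hx
      simpa [hfdef, dist_add_left] using hn x hx
    have heq : (fun n (z : ℂ) => ∏ k ∈ Finset.range n, (sincFactor ((a k : ℂ) * z / 2)) ^ 2)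
        = fun n z => 1 + ∑ k ∈ Finset.range n, F k z := by
      funext n z
      exact my_prod_telescope (fun k => (sincFactor ((a k : ℂ) * z / 2)) ^ 2) n
    rw [heq]
    exact hts1
  -- locally uniform convergence
  have htlu : TendstoLocallyUniformly
      (fun n (z : ℂ) => ∏ k ∈ Finset.range n, (sincFactor ((a k : ℂ) * z / 2)) ^ 2)
      f Filter.atTop := by
    rw [tendstoLocallyUniformly_iff_forall_isCompact]
    intro K hK
    obtain ⟨R, hRK⟩ := hK.isBounded.subset_closedBall 0
    exact (key (max R 0) (le_max_right _ _)).mono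
      (hRK.trans (Metric.closedBall_subset_closedBall (le_max_left _ _)))
  -- differentiability of partial products
  have hdiffn : ∀ n, Differentiable ℂ
      (fun z : ℂ => ∏ k ∈ Finset.range n, (sincFactor ((a k : ℂ) * z / 2)) ^ 2) := by
    intro n
    induction n with
    | zero => simp
    | succ n ih =>
      have hk : Differentiable ℂ (fun z : ℂ => (sincFactor ((a n : ℂ) * z / 2)) ^ 2) := by
        have h1 : Differentiable ℂ (fun z : ℂ => (a n : ℂ) * z / 2) :=
          (differentiable_id.const_mul _).div_const 2
        exact (my_differentiable_sincFactor.comp h1).pow 2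
      simpa only [Finset.prod_range_succ, Pi.mul_def] using ih.mul hk
  have hdiff : Differentiable ℂ f := by
    have htlu' := (tendstoLocallyUniformlyOn_univ.2 htlu)
    have := htlu'.differentiableOn
      (Filter.Eventually.of_forall fun n => (hdiffn n).differentiableOn) isOpen_univ
    rw [← differentiableOn_univ]
    exact this
  refine ⟨f, htlu, hdiff, ?_⟩
  intro z r hr
  have hptw : Filter.Tendsto
      (fun n => ∏ k ∈ Finset.range n, (sincFactor ((a k : ℂ) * ((r : ℂ) * z) / 2)) ^ 2)
      Filter.atTop (nhds (f ((r : ℂ) * z))) := by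
    have hmem : (r : ℂ) * z ∈ Metric.closedBall (0 : ℂ) (‖(r : ℂ) * z‖) := by
      simp [Complex.dist_eq]
    exact (key _ (norm_nonneg _)).tendsto_at hmem
  have hb : ∀ n, ‖
      (∏ k ∈ Finset.range n, (sincFactor ((a k : ℂ) * ((r : ℂ) * z) / 2)) ^ 2)‖
        ≤ Real.exp (r * |z.im|) := by
    intro n
    have := hProd n ((r : ℂ) * z)
    have himrz : ((r : ℂ) * z).im = r * z.im := by simp
    rwa [himrz, abs_mul, abs_of_pos hr] at this
  exact le_of_tendsto ((continuous_norm.tendsto _).comp hptw)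
    (Filter.Eventually.of_forall hb)
end

section
/- Let K: ℂ → ℂ be an entire function, r > 0, and α: ℝ → (0,∞) even, non-decreasing on [0,∞), submultiplicative, with |K(z)| ≤ c_r·e^{r|Im z|}/α(|z|) for some c_r > 0 and all z ∈ ℂ (with K(rz) in place where relevant). Then for K_r(z) := r·K(rz), each derivative satisfies |K_r^{(n)}(t)| ≤ c'_r·√(2πn)·α(n/r)·r^n/α(|t|) for all t ∈ ℝ and n ∈ ℕ, where c'_r = e^{1/12}·r·c_r. -/
open Real Nat

lemma exp_le_aux : Real.exp 1 ≤ Real.exp (1/12) * Real.sqrt (2 * π) := by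
  have h6 : Real.exp (11/6) ^ 6 < (2 * π) ^ 6 := by
    have e11 : Real.exp (11/6) ^ 6 = Real.exp 1 ^ 11 := by
      rw [← Real.exp_nat_mul, ← Real.exp_nat_mul]; norm_num
    have h1 : Real.exp 1 ^ 11 < 2.7182818286 ^ 11 :=
      pow_lt_pow_left₀ Real.exp_one_lt_d9 (Real.exp_pos 1).le (by norm_num)
    have h3 : (2 * 3.141592 : ℝ) ^ 6 ≤ (2 * π) ^ 6 := by
      apply pow_le_pow_left₀ (by norm_num)
      nlinarith [Real.pi_gt_d6]
    calc Real.exp (11/6) ^ 6 = Real.exp 1 ^ 11 := e11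
      _ < 2.7182818286 ^ 11 := h1
      _ < (2 * 3.141592) ^ 6 := by norm_num
      _ ≤ (2 * π) ^ 6 := h3
  have h : Real.exp (11/6) ≤ 2 * π := (lt_of_pow_lt_pow_left₀ 6 (by positivity) h6).le
  have hs : Real.exp (11/12) ≤ Real.sqrt (2 * π) := by
    rw [show Real.exp (11/12) = Real.sqrt (Real.exp (11/6)) by
      rw [show (11:ℝ)/6 = 11/12 + 11/12 by norm_num, Real.exp_add,
        Real.sqrt_mul_self (Real.exp_pos _).le]]
    exact Real.sqrt_le_sqrt h
  calc Real.exp 1 = Real.exp (1/12) * Real.exp (11/12) := by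
        rw [← Real.exp_add]; norm_num
    _ ≤ Real.exp (1/12) * Real.sqrt (2 * π) := by
        exact mul_le_mul_of_nonneg_left hs (Real.exp_pos _).le

lemma stirling_aux (n : ℕ) (hn : 1 ≤ n) :
    (n ! : ℝ) * Real.exp n / (n : ℝ) ^ n ≤ Real.exp (1/12) * Real.sqrt (2 * π * n) := by
  have hnpos : (0:ℝ) < n := by exact_mod_cast hn
  have hfact : (n ! : ℝ) * Real.exp n / (n : ℝ) ^ n
      = Stirling.stirlingSeq n * Real.sqrt (2 * n) := by
    have hden : (Real.sqrt (2 * n) * ((n : ℝ) / Real.exp 1) ^ n) ≠ 0 := by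
      positivity
    rw [Stirling.stirlingSeq]
    have hen : Real.exp 1 ^ n = Real.exp n := by
      rw [← Real.exp_nat_mul]; ring_nf
    field_simp [div_pow, ← hen]
    rw [div_pow, hen]; field_simp
  have hmono : Stirling.stirlingSeq n ≤ Real.exp 1 / Real.sqrt 2 := by
    have := Stirling.stirlingSeq'_antitone (Nat.zero_le (n - 1))
    simp only [Function.comp] at this
    rw [Nat.succ_eq_add_one, Nat.sub_add_cancel hn] at this
    simpa [Stirling.stirlingSeq_one] using this
  have hsqrt2n : Real.sqrt (2 * n) = Real.sqrt 2 * Real.sqrt n := by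
    rw [← Real.sqrt_mul (by norm_num)]
  have hsqrt2pin : Real.sqrt (2 * π * n) = Real.sqrt (2 * π) * Real.sqrt n := by
    rw [← Real.sqrt_mul (by positivity)]
  rw [hfact, hsqrt2n, hsqrt2pin]
  have h1 : Stirling.stirlingSeq n * (Real.sqrt 2 * Real.sqrt n)
      ≤ (Real.exp 1 / Real.sqrt 2) * (Real.sqrt 2 * Real.sqrt n) :=
    mul_le_mul_of_nonneg_right hmono (by positivity)
  refine h1.trans ?_
  have h2 : (Real.exp 1 / Real.sqrt 2) * (Real.sqrt 2 * Real.sqrt n)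
      = Real.exp 1 * Real.sqrt n := by
    have : Real.sqrt 2 ≠ 0 := by positivity
    field_simp
  rw [h2, ← mul_assoc]
  exact mul_le_mul_of_nonneg_right exp_le_aux (Real.sqrt_nonneg _)

/-- Derivative estimates for the scaled kernel K_r(z) = r·K(rz): if K is entire and
|K(rz)| ≤ c_r·e^{r|Im z|}/α(|z|), with α positive, even, non-decreasing on [0,∞) and
submultiplicative, then |K_r^{(n)}(t)| ≤ e^{1/12}·r·c_r·√(2πn)·α(n/r)·rⁿ/α(|t|)
for all real t and n ≥ 1. -/
theorem stmt_9 (K : ℂ → ℂ) (hK : Differentiable ℂ K)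
    (α : ℝ → ℝ)
    (hαpos : ∀ t, 0 < α t)
    (hαeven : ∀ t, α (-t) = α t)
    (hαmono : ∀ s t, 0 ≤ s → s ≤ t → α s ≤ α t)
    (hαsub : ∀ s t, α (s + t) ≤ α s * α t)
    (r : ℝ) (hr : 0 < r) (c : ℝ) (hc : 0 < c)
    (hbound : ∀ z : ℂ, ‖K (r * z)‖ ≤ c * Real.exp (r * |z.im|) / α ‖z‖) :
    ∀ (n : ℕ), 1 ≤ n → ∀ t : ℝ,
      ‖iteratedDeriv n (fun z : ℂ => (r : ℂ) * K ((r : ℂ) * z)) (t : ℂ)‖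
        ≤ (Real.exp (1 / 12) * r * c) * Real.sqrt (2 * π * n) * α ((n : ℝ) / r) * r ^ n / α |t| := by
  intro n hn t
  set f : ℂ → ℂ := fun z : ℂ => (r : ℂ) * K ((r : ℂ) * z) with hf_def
  have hf : Differentiable ℂ f := by
    apply Differentiable.const_mul
    exact hK.comp (differentiable_id.const_mul _)
  have hnpos : (0:ℝ) < n := by exact_mod_cast hn
  set R : ℝ := (n : ℝ) / r with hR_def
  have hR : 0 < R := by positivity
  have hαR := hαpos R
  have hαt := hαpos |t|
  set B : ℝ := r * c * Real.exp n * α R / α |t| with hB_def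
  have hBpos : 0 < B := by positivity
  -- bound on the circle
  have hcirc : ∀ θ : ℝ, ‖f (circleMap (t : ℂ) R θ)‖ ≤ B := by
    intro θ
    set z : ℂ := circleMap (t : ℂ) R θ with hz_def
    have him : |z.im| ≤ R := by
      have hzi : z.im = R * Real.sin θ := by
        simp [hz_def, circleMap, Complex.add_im, Complex.mul_im]
      rw [hzi, abs_mul, abs_of_pos hR]
      nlinarith [abs_sin_le_one θ, hR]
    have habs : |t| ≤ ‖z‖ + R := by
      have h1 : ‖z - (t : ℂ)‖ = R := by
        rw [hz_def, circleMap_sub_center, norm_circleMap_zero, abs_of_pos hR]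
      calc |t| = ‖(t : ℂ)‖ := (Complex.norm_real t).symm
        _ = ‖z - (z - (t : ℂ))‖ := by ring_nf
        _ ≤ ‖z‖ + ‖z - (t : ℂ)‖ := norm_sub_le _ _
        _ = ‖z‖ + R := by rw [h1]
    have hα1 : α |t| ≤ α (‖z‖) * α R :=
      (hαmono _ _ (abs_nonneg t) habs).trans (hαsub _ _)
    have hexp : Real.exp (r * |z.im|) ≤ Real.exp n := by
      apply Real.exp_le_exp.2
      have h2 : r * |z.im| ≤ r * R := mul_le_mul_of_nonneg_left him hr.le
      calc r * |z.im| ≤ r * R := h2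
        _ = n := by rw [hR_def]; field_simp
    have hnorm : ‖f z‖ = r * ‖K ((r:ℂ) * z)‖ := by
      rw [hf_def]
      simp only [norm_mul, Complex.norm_real, Real.norm_eq_abs, abs_of_pos hr]
    rw [hnorm]
    have h3 : ‖K ((r:ℂ) * z)‖ ≤ c * Real.exp (r * |z.im|) / α (‖z‖) :=
      hbound z
    have h4 : c * Real.exp (r * |z.im|) / α (‖z‖) ≤ c * Real.exp n * α R / α |t| := by
      rw [div_le_div_iff₀ (hαpos _) (hαpos _)]
      have h5 : Real.exp (r * |z.im|) * α |t| ≤ Real.exp n * (α (‖z‖) * α R) :=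
        mul_le_mul hexp hα1 (hαpos _).le (Real.exp_pos _).le
      nlinarith [hc]
    rw [hB_def]
    calc r * ‖K ((r:ℂ) * z)‖ ≤ r * (c * Real.exp (r * |z.im|) / α (‖z‖)) :=
          mul_le_mul_of_nonneg_left h3 hr.le
      _ ≤ r * (c * Real.exp n * α R / α |t|) := mul_le_mul_of_nonneg_left h4 hr.le
      _ = r * c * Real.exp n * α R / α |t| := by ring
  -- power series
  set R' : NNReal := ⟨R, hR.le⟩ with hR'_def
  have hps : HasFPowerSeriesOnBall f (cauchyPowerSeries f (t : ℂ) R') (t : ℂ) R' :=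
    hf.differentiableOn.hasFPowerSeriesOnBall (by exact_mod_cast hR)
  have hRR' : ((R' : ℝ)) = R := rfl
  -- coefficient bound
  have hint : ∫ θ in (0:ℝ)..2*π, ‖f (circleMap (t:ℂ) R θ)‖ ≤ 2*π*B := by
    have hcont : Continuous fun θ : ℝ => ‖f (circleMap (t:ℂ) R θ)‖ :=
      (hf.continuous.comp (continuous_circleMap _ _)).norm
    have h6 := intervalIntegral.integral_mono_on (by positivity : (0:ℝ) ≤ 2*π)
      (hcont.intervalIntegrable _ _) (intervalIntegrable_const (c := B) (μ := MeasureTheory.volume)) (fun x _ => hcirc x)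
    have h7' : (∫ _θ in (0:ℝ)..2*π, B) = 2*π*B := by
      rw [intervalIntegral.integral_const, smul_eq_mul]; ring
    exact h7' ▸ h6
  have hcoef : ‖cauchyPowerSeries f (t:ℂ) R n‖ ≤ B * R⁻¹ ^ n := by
    refine (norm_cauchyPowerSeries_le f (t:ℂ) R n).trans ?_
    rw [abs_of_pos hR]
    have h7 : (2*π)⁻¹ * ∫ θ in (0:ℝ)..2*π, ‖f (circleMap (t:ℂ) R θ)‖ ≤ (2*π)⁻¹ * (2*π*B) :=
      mul_le_mul_of_nonneg_left hint (by positivity)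
    calc ((2*π)⁻¹ * ∫ θ in (0:ℝ)..2*π, ‖f (circleMap (t:ℂ) R θ)‖) * R⁻¹ ^ n
        ≤ ((2*π)⁻¹ * (2*π*B)) * R⁻¹ ^ n := mul_le_mul_of_nonneg_right h7 (by positivity)
      _ = B * R⁻¹ ^ n := by
          have : (2*π : ℝ) ≠ 0 := by positivity
          field_simp
  -- derivative via power series
  have hd : ‖iteratedDeriv n f (t:ℂ)‖ ≤ (n ! : ℝ) * ‖cauchyPowerSeries f (t:ℂ) R n‖ := by
    rw [iteratedDeriv_eq_iteratedFDeriv, ← hps.factorial_smul (1:ℂ) n,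
      nsmul_eq_mul, norm_mul, Complex.norm_natCast]
    apply mul_le_mul_of_nonneg_left _ (by positivity)
    have h8 := (cauchyPowerSeries f (t:ℂ) R n).le_opNorm (fun _ => (1:ℂ))
    simp only [hRR']
    simpa using h8
  -- combine
  calc ‖iteratedDeriv n f (t:ℂ)‖
      ≤ (n ! : ℝ) * (B * R⁻¹ ^ n) := hd.trans (mul_le_mul_of_nonneg_left hcoef (by positivity))
    _ = ((n ! : ℝ) * Real.exp n / (n : ℝ) ^ n) * (r * c * α R * r ^ n / α |t|) := by
        rw [hB_def, hR_def]
        have hn0 : (n : ℝ) ≠ 0 := hnpos.ne'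
        have hαt0 : α |t| ≠ 0 := hαt.ne'
        field_simp
        ring_nf
        rw [inv_pow]; field_simp
    _ ≤ (Real.exp (1/12) * Real.sqrt (2 * π * n)) * (r * c * α R * r ^ n / α |t|) :=
        mul_le_mul_of_nonneg_right (stirling_aux n hn) (by positivity)
    _ = (Real.exp (1 / 12) * r * c) * Real.sqrt (2 * π * n) * α ((n : ℝ) / r) * r ^ n / α |t| := by
        rw [hR_def]; ring
end

section
/- Let A generate a C₀-group {U(t)} on a Banach space X with M_U(t) = sup_{|τ|≤t}‖U(τ)‖. If x ∈ D(A^m) for m ∈ ℕ, then for every k ∈ ℕ and r ≥ 1: ω̃_{k+m}(1/r, x, A) ≤ (M_U(m/r)/r^m) · ω̃_k(1/r, A^m x, A). -/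
open Filter Topology MeasureTheory

variable {X : Type*} [NormedAddCommGroup X] [NormedSpace ℝ X] [CompleteSpace X]

/-- `M_U(t) = sup_{|τ| ≤ t} ‖U(τ)‖`. -/
noncomputable def groupBound (U : ℝ → X →L[ℝ] X) (t : ℝ) : ℝ :=
  sSup {a : ℝ | ∃ τ : ℝ, |τ| ≤ t ∧ a = ‖U τ‖}

/-- `ω_k(t,x) = sup_{0 ≤ τ ≤ t} ‖(U(τ)-I)^k x‖`, the k-th modulus of continuity. -/
noncomputable def modulus (U : ℝ → X →L[ℝ] X) (k : ℕ) (t : ℝ) (x : X) : ℝ :=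
  sSup {a : ℝ | ∃ τ : ℝ, 0 ≤ τ ∧ τ ≤ t ∧ a = ‖((U τ - 1) ^ k) x‖}

/-- `ω̃_k(t,x) = sup_{|τ| ≤ t} ‖(U(τ)-I)^k x‖`, the symmetric modulus of continuity. -/
noncomputable def symModulus (U : ℝ → X →L[ℝ] X) (k : ℕ) (t : ℝ) (x : X) : ℝ :=
  sSup {a : ℝ | ∃ τ : ℝ, |τ| ≤ t ∧ a = ‖((U τ - 1) ^ k) x‖}

/-- `U` is a `C₀`-group of bounded operators. -/
structure IsC0Group (U : ℝ → X →L[ℝ] X) : Prop where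
  map_zero : U 0 = 1
  map_add : ∀ s t : ℝ, U (s + t) = U s ∘L U t
  cont : ∀ x : X, Continuous fun t : ℝ => U t x

/-- The chain relation `A (xs n) = xs (n+1)` for the generator `A` of the group `U`,
expressed via `d/ds U(s) xs n = U(s) (xs (n+1))`. -/
def GenChain (U : ℝ → X →L[ℝ] X) (xs : ℕ → X) : Prop :=
  ∀ (n : ℕ) (s : ℝ), HasDerivAt (fun t : ℝ => U t (xs n)) (U s (xs (n + 1))) s

/-- `y` is an entire vector of exponential type ≤ r for the generator of `U`:
`σ(y,A) = limsup ‖Aⁿy‖^{1/n} ≤ r`. -/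
def ExpTypeLe (U : ℝ → X →L[ℝ] X) (y : X) (r : ℝ) : Prop :=
  ∃ xs : ℕ → X, xs 0 = y ∧ GenChain U xs ∧
    ∀ ρ : ℝ, r < ρ → ∃ c : ℝ, 0 < c ∧ ∀ n : ℕ, ‖xs n‖ ≤ c * ρ ^ n

/-- `E_r(x,A)`: the best approximation of `x` by exponential type entire vectors
of type at most `r`. -/
noncomputable def bestApprox (U : ℝ → X →L[ℝ] X) (x : X) (r : ℝ) : ℝ :=
  sInf {d : ℝ | ∃ y : X, ExpTypeLe U y r ∧ d = ‖x - y‖}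

/-- If x ∈ D(A^m) (witnessed by the chain xs with xs 0 = x and A xs_n = xs_{n+1}
for n < m, so that A^m x = xs m), then for every k ≥ 1 and r ≥ 1:
ω̃_{k+m}(1/r, x) ≤ (M_U(m/r)/r^m)·ω̃_k(1/r, A^m x). -/
theorem stmt_15 {X : Type*} [NormedAddCommGroup X] [NormedSpace ℝ X] [CompleteSpace X]
    (U : ℝ → X →L[ℝ] X) (hU : IsC0Group U)
    (m : ℕ) (hm : 1 ≤ m) (x : X) (xs : ℕ → X) (hx0 : xs 0 = x)
    (hchain : ∀ n < m, ∀ s : ℝ, HasDerivAt (fun t : ℝ => U t (xs n)) (U s (xs (n + 1))) s)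
    (k : ℕ) (hk : 1 ≤ k) (r : ℝ) (hr : 1 ≤ r) :
    symModulus U (k + m) (1 / r) x
      ≤ (groupBound U ((m : ℝ) / r) / r ^ m) * symModulus U k (1 / r) (xs m) := by

  have hr0 : (0:ℝ) < r := lt_of_lt_of_le one_pos hr
  have ht0 : (0:ℝ) ≤ 1 / r := by positivity
  set T : ℝ := (m : ℝ) / r with hT
  have hT0 : (0:ℝ) ≤ T := by positivity
  have htT : 1 / r ≤ T := by
    rw [hT]
    gcongr
    exact_mod_cast hm
  -- Banach–Steinhaus uniform bound
  obtain ⟨C, hC⟩ : ∃ C, ∀ τ : {τ : ℝ // |τ| ≤ T}, ‖U τ.1‖ ≤ C := by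
    apply banach_steinhaus
    intro y
    obtain ⟨c, hc⟩ := (isCompact_Icc (a := -T) (b := T)).exists_bound_of_continuousOn
      (hU.cont y).continuousOn
    exact ⟨c, fun τ => hc τ.1 (by
      have := abs_le.mp τ.2
      exact Set.mem_Icc.mpr ⟨this.1, this.2⟩)⟩
  have hbddT : BddAbove {a : ℝ | ∃ τ : ℝ, |τ| ≤ T ∧ a = ‖U τ‖} := by
    refine ⟨C, ?_⟩
    rintro a ⟨τ, hτ, rfl⟩
    exact hC ⟨τ, hτ⟩
  set M : ℝ := groupBound U T with hMdef
  have hMle : ∀ σ : ℝ, |σ| ≤ T → ‖U σ‖ ≤ M := fun σ hσ => le_csSup hbddT ⟨σ, hσ, rfl⟩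
  have hM0 : 0 ≤ M := le_trans (norm_nonneg (U 0)) (hMle 0 (by simpa using hT0))
  -- commutation
  have hcommU : ∀ a b : ℝ, Commute (U a) (U b) := by
    intro a b
    show U a ∘L U b = U b ∘L U a
    rw [← hU.map_add, ← hU.map_add, add_comm]
  have hcomm : ∀ (a τ : ℝ) (p : ℕ) (w : X),
      ((U τ - 1) ^ p) (U a w) = U a (((U τ - 1) ^ p) w) := by
    intro a τ p w
    have h : Commute (U a) ((U τ - 1) ^ p) :=
      (((hcommU a τ).sub_right (Commute.one_right _)).pow_right p)
    have := congrArg (fun f : X →L[ℝ] X => f w) h.eq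
    simpa [ContinuousLinearMap.mul_apply] using this.symm
  -- FTC step
  have hFTC : ∀ n, n < m → ∀ a τ : ℝ,
      (U τ - 1) (U a (xs n)) = ∫ u in a..(a + τ), U u (xs (n + 1)) := by
    intro n hn a τ
    have hint : IntervalIntegrable (fun u : ℝ => U u (xs (n + 1))) volume a (a + τ) :=
      (hU.cont _).intervalIntegrable a (a + τ)
    rw [intervalIntegral.integral_eq_sub_of_hasDerivAt (fun u _ => hchain n hn u) hint]
    have h1 : U τ (U a (xs n)) = U (a + τ) (xs n) := by
      rw [add_comm, hU.map_add]; rfl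
    simp [ContinuousLinearMap.sub_apply, h1]
  -- bddAbove for modulus sets
  have hbmod : ∀ (p : ℕ), 0 < p → ∀ (y : X),
      BddAbove {a : ℝ | ∃ τ : ℝ, |τ| ≤ 1 / r ∧ a = ‖((U τ - 1) ^ p) y‖} := by
    intro p hp y
    refine ⟨(M + 1) ^ p * ‖y‖, ?_⟩
    rintro a ⟨τ, hτ, rfl⟩
    calc ‖((U τ - 1) ^ p) y‖ ≤ ‖(U τ - 1) ^ p‖ * ‖y‖ := ContinuousLinearMap.le_opNorm _ _
      _ ≤ (M + 1) ^ p * ‖y‖ := by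
          gcongr
          calc ‖(U τ - 1) ^ p‖ ≤ ‖U τ - 1‖ ^ p := norm_pow_le' _ hp
            _ ≤ (M + 1) ^ p := by
                apply pow_le_pow_left₀ (norm_nonneg _)
                calc ‖U τ - 1‖ ≤ ‖U τ‖ + ‖(1 : X →L[ℝ] X)‖ := norm_sub_le _ _
                  _ ≤ M + 1 := add_le_add (hMle τ (hτ.trans htT)) ContinuousLinearMap.norm_id_le
  set S : ℝ := symModulus U k (1 / r) (xs m) with hSdef
  have hSv : ∀ τ : ℝ, |τ| ≤ 1 / r → ‖((U τ - 1) ^ k) (xs m)‖ ≤ S :=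
    fun τ hτ => le_csSup (hbmod k hk (xs m)) ⟨τ, hτ, rfl⟩
  have hS0 : 0 ≤ S := le_trans (norm_nonneg _) (hSv 0 (by simpa using ht0))
  -- main pointwise bound
  have key : ∀ τ : ℝ, |τ| ≤ 1 / r → ∀ j, j ≤ m → ∀ a : ℝ, |a| + j * |τ| ≤ T →
      ‖((U τ - 1) ^ (k + j)) (U a (xs (m - j)))‖ ≤ |τ| ^ j * (M * ‖((U τ - 1) ^ k) (xs m)‖) := by
    intro τ hτ j
    induction j with
    | zero =>
        intro _ a ha
        simp only [Nat.add_zero, Nat.sub_zero, pow_zero, one_mul]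
        rw [hcomm a τ k (xs m)]
        calc ‖U a (((U τ - 1) ^ k) (xs m))‖
            ≤ ‖U a‖ * ‖((U τ - 1) ^ k) (xs m)‖ := ContinuousLinearMap.le_opNorm _ _
          _ ≤ M * ‖((U τ - 1) ^ k) (xs m)‖ := by
              gcongr
              exact hMle a (by simpa using ha)
    | succ j ih =>
        intro hjm a ha
        have hjm' : j ≤ m := Nat.le_of_succ_le hjm
        have hidx : m - (j + 1) + 1 = m - j := by omega
        have hsplit : ((U τ - 1) ^ (k + (j + 1))) (U a (xs (m - (j + 1))))
            = ((U τ - 1) ^ (k + j)) ((U τ - 1) (U a (xs (m - (j + 1))))) := by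
          rw [show k + (j + 1) = (k + j) + 1 by ring, pow_succ,
            ContinuousLinearMap.mul_apply]
        have hint : IntervalIntegrable (fun u : ℝ => U u (xs (m - j))) volume a (a + τ) :=
          (hU.cont _).intervalIntegrable a (a + τ)
        rw [hsplit, hFTC (m - (j + 1)) (by omega) a τ, hidx,
          ContinuousLinearMap.intervalIntegral_comp_comm _ hint |>.symm]
        have hbound : ∀ u ∈ Set.uIoc a (a + τ),
            ‖((U τ - 1) ^ (k + j)) (U u (xs (m - j)))‖
              ≤ |τ| ^ j * (M * ‖((U τ - 1) ^ k) (xs m)‖) := by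
          intro u hu
          apply ih hjm' u
          have habs : |u| ≤ |a| + |τ| := by
            rcases Set.mem_uIoc.mp hu with ⟨h1, h2⟩ | ⟨h1, h2⟩ <;>
              · rw [abs_le]
                constructor <;>
                  nlinarith [neg_abs_le a, le_abs_self a, neg_abs_le τ, le_abs_self τ]
          have : (↑(j + 1) : ℝ) * |τ| = j * |τ| + |τ| := by push_cast; ring
          linarith [ha, this ▸ ha]
        calc ‖∫ u in a..(a + τ), ((U τ - 1) ^ (k + j)) (U u (xs (m - j)))‖
            ≤ |τ| ^ j * (M * ‖((U τ - 1) ^ k) (xs m)‖) * |a + τ - a| :=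
              intervalIntegral.norm_integral_le_of_norm_le_const hbound
          _ = |τ| ^ (j + 1) * (M * ‖((U τ - 1) ^ k) (xs m)‖) := by
              rw [add_sub_cancel_left, pow_succ]; ring
  -- conclude
  have hnonempty : {a : ℝ | ∃ τ : ℝ, |τ| ≤ 1 / r ∧ a = ‖((U τ - 1) ^ (k + m)) x‖}.Nonempty :=
    ⟨‖((U 0 - 1) ^ (k + m)) x‖, 0, by simpa using ht0, rfl⟩
  rw [symModulus]
  apply csSup_le hnonempty
  rintro b ⟨τ, hτ, rfl⟩
  have h0 : ((U τ - 1) ^ (k + m)) x = ((U τ - 1) ^ (k + m)) (U 0 (xs (m - m))) := by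
    rw [hU.map_zero, Nat.sub_self, hx0]
    rfl
  have hmain := key τ hτ m le_rfl 0 (by
    rw [abs_zero, zero_add, hT]
    rw [div_eq_mul_one_div]
    exact mul_le_mul_of_nonneg_left hτ (Nat.cast_nonneg m))
  rw [h0]
  calc ‖((U τ - 1) ^ (k + m)) (U 0 (xs (m - m)))‖
      ≤ |τ| ^ m * (M * ‖((U τ - 1) ^ k) (xs m)‖) := hmain
    _ ≤ (1 / r) ^ m * (M * S) := by
        have h1 : |τ| ^ m ≤ (1 / r) ^ m := pow_le_pow_left₀ (abs_nonneg τ) hτ m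
        have h2 : M * ‖((U τ - 1) ^ k) (xs m)‖ ≤ M * S :=
          mul_le_mul_of_nonneg_left (hSv τ hτ) hM0
        exact mul_le_mul h1 h2 (by positivity) (by positivity)
    _ = M / r ^ m * S := by
        rw [one_div, inv_pow]
        ring
end
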